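/- For all nonempty strings v and u over the alphabet V, one has 0 ≤ L^m(v) + L^m(u) − L^m(vu), and there exists a shortest admissible grammar G for vu such that L^m(v) + L^m(u) − L^m(vu) ≤ L_0(G) + L^{>1}(vu), where L_0(G) is the total length of the non-initial productions of G and vu denotes the concatenation of v and u. -/

import Mathlib

/-- Expansion of a string of terminals (`Sum.inl`) and nonterminals (`Sum.inr j`,
a reference to the `j`-th production in `prods`), with recursion depth bounded
by `fuel`. -/
def expandStr {V : Type*} (prods : List (List (V ⊕ ℕ))) : ℕ → List (V ⊕ ℕ) → List V
  | 0, _ => []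
  | fuel + 1, g =>
      (g.map fun s =>
        match s with
        | Sum.inl a => [a]
        | Sum.inr j => expandStr prods fuel (prods.getD j [])).flatten

/-- An admissible grammar over the terminal alphabet `V`: a nonempty list of
productions `g_0, g_1, …, g_k` (the production of nonterminal `b_i` being
`prods[i]`), each production a nonempty string of terminals and nonterminals,
where the production of `b_i` may refer only to nonterminals `b_j` with
`i < j ≤ k`.  The dependence among nonterminals is thus acyclic, so every
nonterminal expands, by recursively substituting productions, into a unique
finite string of terminals. -/
structure AdmissibleGrammar (V : Type*) where
  prods : List (List (V ⊕ ℕ))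
  prods_ne : prods ≠ []
  prod_ne : ∀ g ∈ prods, g ≠ []
  refs : ∀ i, i < prods.length → ∀ j, Sum.inr j ∈ prods.getD i [] →
    i < j ∧ j < prods.length

namespace AdmissibleGrammar

/-- The string of terminals into which the initial nonterminal `b_0` expands.
(Since references go strictly upwards, recursion depth `prods.length`
suffices to expand everything.) -/
def expansion {V : Type*} (G : AdmissibleGrammar V) : List V :=
  expandStr G.prods G.prods.length (G.prods.getD 0 [])

/-- `G` is an admissible grammar for the string `v`. -/
def IsFor {V : Type*} (G : AdmissibleGrammar V) (v : List V) : Prop :=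
  G.expansion = v

/-- The length of the grammar: the total number of terminal and nonterminal
symbol tokens in all its productions. -/
def len {V : Type*} (G : AdmissibleGrammar V) : ℕ :=
  (G.prods.map List.length).sum

/-- The total length of the non-initial productions of `G`
(the length of the vocabulary of `G`). -/
def vocabLen {V : Type*} (G : AdmissibleGrammar V) : ℕ :=
  ((G.prods.drop 1).map List.length).sum

end AdmissibleGrammar

/-- `Lm v`: the minimal length of an admissible grammar for `v`. -/
noncomputable def Lm {V : Type*} (v : List V) : ℕ :=
  sInf {n | ∃ G : AdmissibleGrammar V, G.IsFor v ∧ G.len = n}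

/-- `LgtOne v`: the maximal length of a string occurring at two or more
distinct (possibly overlapping) positions in `v`; `0` if there is none. -/
noncomputable def LgtOne {V : Type*} (v : List V) : ℕ :=
  sSup {n | ∃ w : List V, w.length = n ∧
    ∃ i j : ℕ, i ≠ j ∧ w <+: v.drop i ∧ w <+: v.drop j}

section Lemmas
variable {V : Type*} (P : List (List (V ⊕ ℕ)))

theorem expandStr_nil (f : ℕ) : expandStr P f [] = [] := by
  cases f <;> simp [expandStr]

theorem expandStr_append (f : ℕ) (g1 g2 : List (V ⊕ ℕ)) :
    expandStr P f (g1 ++ g2) = expandStr P f g1 ++ expandStr P f g2 := by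
  cases f <;> simp [expandStr]

theorem expandStr_map_inl (f : ℕ) (l : List V) :
    expandStr P (f + 1) (l.map Sum.inl) = l := by
  induction l with
  | nil => simp [expandStr]
  | cons a t ih => simpa [expandStr] using (by simpa [expandStr] using ih)

theorem expandStr_fuel
    (href : ∀ t, t < P.length → ∀ j, Sum.inr j ∈ P.getD t [] → t < j) :
    ∀ d f f' g, (∀ j, Sum.inr j ∈ g → P.length ≤ j + d) → d < f → d < f' →
      expandStr P f g = expandStr P f' g := by
  intro d
  induction d with
  | zero =>
    intro f f' g hg hf hf'
    obtain ⟨x, rfl⟩ := Nat.exists_eq_add_of_lt hf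
    obtain ⟨y, rfl⟩ := Nat.exists_eq_add_of_lt hf'
    simp only [expandStr, Nat.zero_add]
    congr 1
    apply List.map_congr_left
    intro s hs
    match s with
    | Sum.inl a => rfl
    | Sum.inr j =>
      have : P.length ≤ j := by simpa using hg j hs
      show expandStr P x (P.getD j []) = expandStr P y (P.getD j [])
      rw [List.getD_eq_default _ _ this]
      simp [expandStr_nil]
  | succ d ih =>
    intro f f' g hg hf hf'
    obtain ⟨x, rfl⟩ := Nat.exists_eq_add_of_lt hf
    obtain ⟨y, rfl⟩ := Nat.exists_eq_add_of_lt hf'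
    simp only [expandStr]
    congr 1
    apply List.map_congr_left
    intro s hs
    match s with
    | Sum.inl a => rfl
    | Sum.inr j =>
      show expandStr P (d+1+x) (P.getD j []) = expandStr P (d+1+y) (P.getD j [])
      apply ih
      · intro j' hj'
        by_cases hjP : j < P.length
        · have := href j hjP j' hj'
          have := hg j hs
          omega
        · rw [List.getD_eq_default _ _ (not_lt.1 hjP)] at hj'
          simp at hj'
      · omega
      · omega

theorem expandStr_stab
    (href : ∀ t, t < P.length → ∀ j, Sum.inr j ∈ P.getD t [] → t < j)
    (g : List (V ⊕ ℕ)) (hg : ∀ j, Sum.inr j ∈ g → 1 ≤ j)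
    (f f' : ℕ) (hf : P.length ≤ f) (hf' : P.length ≤ f') (h1 : 1 ≤ P.length) :
    expandStr P f g = expandStr P f' g := by
  apply expandStr_fuel P href (P.length - 1)
  · intro j hj; have := hg j hj; omega
  · omega
  · omega

theorem expandStr_map (P' : List (List (V ⊕ ℕ))) (σ' : ℕ → ℕ) (S : ℕ → Prop)
    (hS : ∀ j, S j → P'.getD (σ' j) [] = (P.getD j []).map (Sum.map id σ') ∧
      (∀ j', Sum.inr j' ∈ P.getD j [] → S j')) :
    ∀ f g, (∀ j, Sum.inr j ∈ g → S j) →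
      expandStr P' f (g.map (Sum.map id σ')) = expandStr P f g := by
  intro f
  induction f with
  | zero => intro g hg; rfl
  | succ f ih =>
    intro g hg
    simp only [expandStr, List.map_map]
    congr 1
    apply List.map_congr_left
    intro s hs
    match s with
    | Sum.inl a => rfl
    | Sum.inr j =>
      show expandStr P' f (P'.getD (σ' j) []) = expandStr P f (P.getD j [])
      rw [(hS j (hg j hs)).1]
      exact ih _ (hS j (hg j hs)).2

theorem expandStr_ne_nil
    (href2 : ∀ t, t < P.length → ∀ j, Sum.inr j ∈ P.getD t [] → t < j ∧ j < P.length)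
    (hne : ∀ g ∈ P, g ≠ []) :
    ∀ d f g, d < f → g ≠ [] →
      (∀ j, Sum.inr j ∈ g → j < P.length ∧ P.length ≤ j + d) →
      expandStr P f g ≠ [] := by
  intro d
  induction d with
  | zero =>
    intro f g hf hgne hg
    obtain ⟨x, rfl⟩ := Nat.exists_eq_add_of_lt hf
    match g with
    | s :: g' =>
      match s with
      | Sum.inl a => simp [expandStr]
      | Sum.inr j => have := hg j (by simp); omega
  | succ d ih =>
    intro f g hf hgne hg
    obtain ⟨x, rfl⟩ := Nat.exists_eq_add_of_lt hf
    match g with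
    | s :: g' =>
      match s with
      | Sum.inl a => simp [expandStr]
      | Sum.inr j =>
        simp only [expandStr, List.map_cons, List.flatten_cons, ne_eq,
          List.append_eq_nil_iff, not_and]
        intro hmain
        exfalso
        have hj := hg j (by simp)
        refine ih (d+1+x) (P.getD j []) (by omega) ?_ ?_ hmain
        · rw [List.getD_eq_getElem _ _ hj.1]
          exact hne _ (List.getElem_mem _)
        · intro j' hj'
          have := href2 j hj.1 j' hj'
          omega

/-- block expansion of a single symbol -/
def blk (s : V ⊕ ℕ) : List V :=
  match s with
  | Sum.inl a => [a]
  | Sum.inr j => expandStr P P.length (P.getD j [])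

theorem expandStr_blk
    (href : ∀ t, t < P.length → ∀ j, Sum.inr j ∈ P.getD t [] → t < j)
    (h1 : 1 ≤ P.length) (g : List (V ⊕ ℕ))
    (hg : ∀ j, Sum.inr j ∈ g → 1 ≤ j ∧ j < P.length) :
    expandStr P P.length g = (g.map (blk P)).flatten := by
  obtain ⟨x, hx⟩ := Nat.exists_eq_add_of_lt h1
  rw [hx]
  simp only [expandStr]
  congr 1
  apply List.map_congr_left
  intro s hs
  match s with
  | Sum.inl a => rfl
  | Sum.inr j =>
    show expandStr P (0 + x) (P.getD j []) = blk P (Sum.inr j)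
    show expandStr P (0 + x) (P.getD j []) = expandStr P P.length (P.getD j [])
    have hj := hg j hs
    apply expandStr_fuel P href (P.length - 2)
    · intro j' hj'
      have := href j hj.2 j' hj'
      omega
    · omega
    · omega
end Lemmas

section NumOcc
variable {V : Type*}

open Classical in
/-- positions where `w` occurs in `l` -/
noncomputable def occFinset (w l : List V) : Finset ℕ :=
  (Finset.range l.length).filter (fun p => w <+: l.drop p)

noncomputable def numOcc (w l : List V) : ℕ := (occFinset w l).card

theorem mem_occFinset {w l : List V} {p : ℕ} :
    p ∈ occFinset w l ↔ p < l.length ∧ w <+: l.drop p := by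
  classical
  simp [occFinset, Finset.mem_filter, Finset.mem_range]

theorem numOcc_self {w : List V} (hw : w ≠ []) : 1 ≤ numOcc w w := by
  have : (0 : ℕ) ∈ occFinset w w := by
    rw [mem_occFinset]
    exact ⟨List.length_pos_iff.2 hw, by simp⟩
  exact Finset.card_pos.2 ⟨0, this⟩

theorem numOcc_append (w a b : List V) :
    numOcc w a + numOcc w b ≤ numOcc w (a ++ b) := by
  classical
  have hsub : occFinset w a ∪ (occFinset w b).image (· + a.length) ⊆
      occFinset w (a ++ b) := by
    intro p hp
    rcases Finset.mem_union.1 hp with hp | hp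
    · rw [mem_occFinset] at hp ⊢
      constructor
      · simp; omega
      · rw [List.drop_append_of_le_length (by omega)]
        exact hp.2.trans (List.prefix_append _ _)
    · obtain ⟨q, hq, rfl⟩ := Finset.mem_image.1 hp
      rw [mem_occFinset] at hq ⊢
      constructor
      · simp; omega
      · rw [add_comm, List.drop_length_add_append]
        exact hq.2
  calc numOcc w a + numOcc w b
      = (occFinset w a).card + ((occFinset w b).image (· + a.length)).card := by
        rw [Finset.card_image_of_injective _ (add_left_injective _)]; rfl
    _ = (occFinset w a ∪ (occFinset w b).image (· + a.length)).card := by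
        rw [Finset.card_union_of_disjoint]
        rw [Finset.disjoint_left]
        intro p hp hp'
        have h1 := (mem_occFinset.1 hp).1
        obtain ⟨q, _, rfl⟩ := Finset.mem_image.1 hp'
        omega
    _ ≤ _ := Finset.card_le_card hsub

theorem numOcc_nil (w : List V) : numOcc w [] = 0 := by
  classical
  simp [numOcc, occFinset]

theorem numOcc_flatten {α : Type*} (w : List V) (h : α → List V) (l : List α) :
    (l.map fun x => numOcc w (h x)).sum ≤ numOcc w ((l.map h).flatten) := by
  induction l with
  | nil => simp [numOcc_nil]
  | cons x t ih =>
    simp only [List.map_cons, List.sum_cons, List.flatten_cons]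
    calc numOcc w (h x) + (t.map fun x => numOcc w (h x)).sum
        ≤ numOcc w (h x) + numOcc w ((t.map h).flatten) := by omega
      _ ≤ _ := numOcc_append _ _ _

theorem single_le_mapsum {α : Type*} (f : α → ℕ) {x : α} {l : List α} (hx : x ∈ l) :
    f x ≤ (l.map f).sum :=
  List.single_le_sum (by simp) _ (List.mem_map_of_mem (f := f) hx)

theorem pair_le_mapsum {α : Type*} (f : α → ℕ) {x y : α} {l : List α}
    (hx : x ∈ l) (hy : y ∈ l) (hxy : x ≠ y) :
    f x + f y ≤ (l.map f).sum := by
  induction l with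
  | nil => simp at hx
  | cons z t ih =>
    rcases List.mem_cons.1 hx with rfl | hx'
    · have hy' : y ∈ t := by
        rcases List.mem_cons.1 hy with rfl | hy'
        · exact absurd rfl hxy
        · exact hy'
      simp only [List.map_cons, List.sum_cons]
      have h1 : f y ≤ (List.map f t).sum := single_le_mapsum f hy'
      omega
    · rcases List.mem_cons.1 hy with rfl | hy'
      · simp only [List.map_cons, List.sum_cons]
        have h1 : f x ≤ (List.map f t).sum := single_le_mapsum f hx'
        omega
      · simp only [List.map_cons, List.sum_cons]
        have h1 := ih hx' hy'
        omega
end NumOcc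

section RFsec
variable {V : Type*} (P : List (List (V ⊕ ℕ)))

/-- reachability among nonterminals -/
inductive RF : ℕ → ℕ → Prop
  | refl (t : ℕ) : RF t t
  | head {t s b : ℕ} : Sum.inr s ∈ P.getD t [] → RF s b → RF t b

/-- expansion of the `t`-th nonterminal -/
def Efn (t : ℕ) : List V := expandStr P P.length (P.getD t [])

variable (href2 : ∀ t, t < P.length → ∀ j, Sum.inr j ∈ P.getD t [] → t < j ∧ j < P.length)

include href2

theorem RF_bounds {x y : ℕ} (h : RF P x y) (hx : x < P.length) :
    x ≤ y ∧ y < P.length := by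
  induction h with
  | refl t => exact ⟨le_rfl, hx⟩
  | head hmem h ih =>
    rename_i t s b
    have hs := href2 t hx s hmem
    have := ih hs.2
    omega

theorem Efn_eq_flatten {t : ℕ} (ht : t < P.length) :
    Efn P t = ((P.getD t []).map (blk P)).flatten := by
  apply expandStr_blk P (fun a b c d => (href2 a b c d).1) (by omega)
  intro j hj
  have := href2 t ht j hj
  omega

theorem occ_blk_le (w : List V) {t : ℕ} (ht : t < P.length) {x : V ⊕ ℕ}
    (hx : x ∈ P.getD t []) :
    numOcc w (blk P x) ≤ numOcc w (Efn P t) := by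
  rw [Efn_eq_flatten P href2 ht]
  exact le_trans (single_le_mapsum (fun x => numOcc w (blk P x)) hx)
    (numOcc_flatten w (blk P) _)

theorem occ_blk_pair_le (w : List V) {t : ℕ} (ht : t < P.length) {x y : V ⊕ ℕ}
    (hx : x ∈ P.getD t []) (hy : y ∈ P.getD t []) (hxy : x ≠ y) :
    numOcc w (blk P x) + numOcc w (blk P y) ≤ numOcc w (Efn P t) := by
  rw [Efn_eq_flatten P href2 ht]
  exact le_trans (pair_le_mapsum (fun x => numOcc w (blk P x)) hx hy hxy)
    (numOcc_flatten w (blk P) _)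

omit href2

theorem dup_le_mapsum {α : Type*} (f : α → ℕ) {x : α} {l la lb : List α}
    (hl : l = la ++ x :: lb) (hx : x ∈ la ∨ x ∈ lb) :
    f x + f x ≤ (l.map f).sum := by
  subst hl
  simp only [List.map_append, List.map_cons, List.sum_append, List.sum_cons]
  rcases hx with h | h
  · have := single_le_mapsum f h; omega
  · have := single_le_mapsum f h; omega

include href2

theorem occ_blk_dup_le (w : List V) {t : ℕ} (ht : t < P.length) {x : V ⊕ ℕ}
    {la lb : List (V ⊕ ℕ)} (hl : P.getD t [] = la ++ x :: lb)
    (hx : x ∈ la ∨ x ∈ lb) :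
    numOcc w (blk P x) + numOcc w (blk P x) ≤ numOcc w (Efn P t) := by
  rw [Efn_eq_flatten P href2 ht]
  exact le_trans (dup_le_mapsum (fun x => numOcc w (blk P x)) hl hx)
    (numOcc_flatten w (blk P) _)

variable {i : ℕ} (hi : 1 ≤ i ∧ i < P.length) (hwne : Efn P i ≠ [])

include hi hwne

omit hi in
theorem claimA : ∀ {s b : ℕ}, RF P s b → s < P.length →
    Sum.inr i ∈ P.getD b [] → 1 ≤ numOcc (Efn P i) (Efn P s) := by
  intro s b h
  induction h with
  | refl t =>
    intro ht hmem
    calc 1 ≤ numOcc (Efn P i) (Efn P i) := numOcc_self hwne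
      _ = numOcc (Efn P i) (blk P (Sum.inr i)) := rfl
      _ ≤ _ := occ_blk_le P href2 _ ht hmem
  | head hmem h ih =>
    rename_i t s' b'
    intro ht hmem'
    have hs' := href2 t ht s' hmem
    calc 1 ≤ numOcc (Efn P i) (Efn P s') := ih hs'.2 hmem'
      _ = numOcc (Efn P i) (blk P (Sum.inr s')) := rfl
      _ ≤ _ := occ_blk_le P href2 _ ht hmem

theorem claimB : ∀ {t b : ℕ}, t < P.length → Sum.inr i ∈ P.getD t [] →
    RF P t b → t ≠ b → Sum.inr i ∈ P.getD b [] →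
    2 ≤ numOcc (Efn P i) (Efn P t) := by
  intro t b ht hmemt h htb hmemb
  cases h with
  | refl => exact absurd rfl htb
  | head hmem h =>
    rename_i s
    have hs := href2 t ht s hmem
    by_cases hsi : s = i
    · subst hsi
      have h1 := RF_bounds P href2 h hs.2
      have h2 := href2 b h1.2 s hmemb
      omega
    · have h1 : 1 ≤ numOcc (Efn P i) (blk P (Sum.inr i)) := numOcc_self hwne
      have h2 : 1 ≤ numOcc (Efn P i) (blk P (Sum.inr s)) :=
        claimA P href2 hwne h hs.2 hmemb
      have := occ_blk_pair_le P href2 (Efn P i) ht hmemt hmem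
        (by simp [hsi, Ne, eq_comm]; exact fun hc => hsi hc.symm)
      omega

theorem claimD : ∀ {t a : ℕ}, RF P t a → ∀ {b : ℕ}, a ≠ b →
    Sum.inr i ∈ P.getD a [] → Sum.inr i ∈ P.getD b [] → t < P.length → RF P t b →
    2 ≤ numOcc (Efn P i) (Efn P t) := by
  intro t a h
  induction h with
  | refl t =>
    intro b hab hmema hmemb ht hb
    exact claimB P href2 hi hwne ht hmema hb hab hmemb
  | head hmem h ih =>
    rename_i t s a'
    intro b hab hmema hmemb ht hb
    have hs := href2 t ht s hmem
    cases hb with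
    | refl =>
      exact claimB P href2 hi hwne ht hmemb (RF.head hmem h) (Ne.symm hab) hmema
    | head hmem' hb' =>
      rename_i s'
      by_cases hss : s = s'
      · subst hss
        have h2 := ih hab hmema hmemb hs.2 hb'
        calc 2 ≤ numOcc (Efn P i) (Efn P s) := h2
          _ = numOcc (Efn P i) (blk P (Sum.inr s)) := rfl
          _ ≤ _ := occ_blk_le P href2 _ ht hmem
      · have h1 : 1 ≤ numOcc (Efn P i) (Efn P s) :=
          claimA P href2 hwne h hs.2 hmema
        have h2 : 1 ≤ numOcc (Efn P i) (Efn P s') :=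
          claimA P href2 hwne hb' (href2 t ht s' hmem').2 hmemb
        have := occ_blk_pair_le P href2 (Efn P i) ht hmem hmem'
          (by simpa using hss)
        have e1 : numOcc (Efn P i) (blk P (Sum.inr s)) = numOcc (Efn P i) (Efn P s) := rfl
        have e2 : numOcc (Efn P i) (blk P (Sum.inr s')) = numOcc (Efn P i) (Efn P s') := rfl
        omega

omit hi hwne

theorem claimE (w : List V) : ∀ {t a : ℕ}, RF P t a → t < P.length →
    numOcc w (Efn P a) ≤ numOcc w (Efn P t) := by
  intro t a h
  induction h with
  | refl t => intro _; exact le_rfl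
  | head hmem h ih =>
    rename_i t s a'
    intro ht
    have hs := href2 t ht s hmem
    calc numOcc w (Efn P a') ≤ numOcc w (Efn P s) := ih hs.2
      _ = numOcc w (blk P (Sum.inr s)) := rfl
      _ ≤ _ := occ_blk_le P href2 _ ht hmem

end RFsec

section Remove
variable {V : Type*}

theorem mem_map_inr {l : List (V ⊕ ℕ)} {σ' : ℕ → ℕ} {j' : ℕ} :
    Sum.inr j' ∈ l.map (Sum.map id σ') ↔ ∃ j, Sum.inr j ∈ l ∧ σ' j = j' := by
  constructor
  · intro h
    obtain ⟨s, hs, hmap⟩ := List.mem_map.1 h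
    match s with
    | Sum.inl a => simp [Sum.map] at hmap
    | Sum.inr j => exact ⟨j, hs, by simpa [Sum.map] using hmap⟩
  · rintro ⟨j, hj, rfl⟩
    exact List.mem_map.2 ⟨Sum.inr j, hj, rfl⟩

theorem remove_prod (G : AdmissibleGrammar V) (t : ℕ)
    (ht1 : 1 ≤ t) (ht2 : t < G.prods.length)
    (hnoref : ∀ j, j < G.prods.length → Sum.inr t ∉ G.prods.getD j []) :
    ∃ G' : AdmissibleGrammar V, G'.expansion = G.expansion ∧
      G'.len + (G.prods.getD t []).length = G.len := by
  set P := G.prods with hP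
  have hPG : P.length = G.prods.length := rfl
  have hlen2 : 2 ≤ P.length := by omega
  set σ' : ℕ → ℕ := fun j => if j < t then j else j - 1 with hσ'
  set σ : (V ⊕ ℕ) → (V ⊕ ℕ) := Sum.map id σ' with hσ
  set P' : List (List (V ⊕ ℕ)) := (P.eraseIdx t).map (List.map σ) with hP'
  have hlen' : P'.length = P.length - 1 := by
    simp [hP', List.length_eraseIdx, ht2]
  have hgetE : ∀ i', i' < P'.length →
      P'.getD i' [] = (P.getD (if i' < t then i' else i' + 1) []).map σ := by
    intro i' hi'
    have h1 : i' < (P.eraseIdx t).length := by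
      rw [List.length_eraseIdx]; simp [ht2]; omega
    rw [List.getD_eq_getElem _ _ hi']
    have : P'[i'] = ((P.eraseIdx t)[i']).map σ := by
      simp [hP']
    rw [this, List.getElem_eraseIdx]
    split_ifs with h
    · rw [List.getD_eq_getElem _ _ (by omega : i' < P.length)]
    · rw [List.getD_eq_getElem _ _ (by omega : i' + 1 < P.length)]
  have hcorr : ∀ j, j ≠ t → j < P.length → P'.getD (σ' j) [] = (P.getD j []).map σ := by
    intro j hjt hjlen
    by_cases hj : j < t
    · have : σ' j = j := by simp [hσ', hj]
      rw [this, hgetE j (by omega)]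
      simp [hj]
    · have h1 : σ' j = j - 1 := by simp [hσ', hj]
      rw [h1, hgetE (j - 1) (by omega)]
      have : ¬ (j - 1 < t) := by omega
      simp only [this, if_false]
      have hj1 : j - 1 + 1 = j := by omega
      rw [hj1]
  have hrefs' : ∀ i, i < P'.length → ∀ j, Sum.inr j ∈ P'.getD i [] →
      i < j ∧ j < P'.length := by
    intro i' hi' j' hj'
    rw [hgetE i' hi'] at hj'
    obtain ⟨j, hjmem, rfl⟩ := mem_map_inr.1 hj'
    set ι := if i' < t then i' else i' + 1 with hι
    have hιlen : ι < P.length := by simp [hι]; split_ifs <;> omega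
    have href := G.refs ι hιlen j hjmem
    have hjt : j ≠ t := fun hc => hnoref ι hιlen (hc ▸ hjmem)
    simp only [hσ']
    constructor
    · simp only [hι] at href ⊢
      split_ifs at href ⊢ <;> omega
    · rw [hlen']
      split_ifs <;> omega
  refine ⟨⟨P', ?_, ?_, hrefs'⟩, ?_, ?_⟩
  · intro hc
    have := congrArg List.length hc
    rw [hlen'] at this
    simp at this
    omega
  · intro g hg
    obtain ⟨g0, hg0, rfl⟩ := List.mem_map.1 hg
    have := G.prod_ne g0 (List.mem_of_mem_eraseIdx hg0)
    simp [this]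
  · -- expansion
    show expandStr P' P'.length (P'.getD 0 []) = G.expansion
    have h00 : σ' 0 = 0 := by simp [hσ']
    have hg0 : P'.getD 0 [] = (P.getD 0 []).map σ := by
      have h := hcorr 0 (by omega) (by omega)
      rw [h00] at h; exact h
    rw [hg0]
    have hg0refs : ∀ j, Sum.inr j ∈ (P.getD 0 []).map σ → 1 ≤ j := by
      intro j' hj'
      obtain ⟨j, hjmem, rfl⟩ := mem_map_inr.1 hj'
      have := G.refs 0 (by omega) j hjmem
      have hjt : j ≠ t := fun hc => hnoref 0 (by omega) (hc ▸ hjmem)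
      simp only [hσ']
      split_ifs <;> omega
    rw [expandStr_stab P' (fun a b c d => (hrefs' a b c d).1) _ hg0refs
      P'.length P.length le_rfl (by omega) (by omega)]
    exact expandStr_map P P' σ' (fun j => j ≠ t ∧ j < P.length)
      (fun j hj => ⟨hcorr j hj.1 hj.2,
        fun j'' hj'' => ⟨fun hc => hnoref j hj.2 (hc ▸ hj''), (G.refs j hj.2 j'' hj'').2⟩⟩)
      P.length (P.getD 0 [])
      (fun j hj => ⟨fun hc => hnoref 0 (by omega) (hc ▸ hj), (G.refs 0 (by omega) j hj).2⟩)
  · -- length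
    show ((P'.map List.length).sum) + (P.getD t []).length = (P.map List.length).sum
    have h1 : P'.map List.length = (P.eraseIdx t).map List.length := by
      simp [hP', List.map_map, Function.comp_def]
    rw [h1, List.eraseIdx_eq_take_drop_succ]
    have h2 : P = P.take t ++ P.drop t := (List.take_append_drop t P).symm
    have h3 : P.drop t = P[t] :: P.drop (t + 1) := List.drop_eq_getElem_cons ht2
    conv_rhs => rw [h2, h3]
    rw [List.getD_eq_getElem _ _ ht2]
    simp only [List.map_append, List.map_cons, List.sum_append, List.sum_cons]
    omega
end Remove

section Basic
variable {V : Type*}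

def trivGrammar (v : List V) (hv : v ≠ []) : AdmissibleGrammar V where
  prods := [v.map Sum.inl]
  prods_ne := by simp
  prod_ne := by
    intro g hg
    simp only [List.mem_singleton] at hg
    subst hg
    simpa using hv
  refs := by
    intro i hi j hj
    simp only [List.length_singleton] at hi
    interval_cases i
    simp only [List.getD_cons_zero] at hj
    exfalso
    obtain ⟨a, _, ha⟩ := List.mem_map.1 hj
    simp at ha

theorem trivGrammar_isFor (v : List V) (hv : v ≠ []) : (trivGrammar v hv).IsFor v := by
  show expandStr _ _ _ = v
  simp only [trivGrammar, List.length_singleton, List.getD_cons_zero]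
  exact expandStr_map_inl _ 0 v

theorem exists_min_grammar (v : List V) (hv : v ≠ []) :
    ∃ G : AdmissibleGrammar V, G.IsFor v ∧ G.len = Lm v := by
  have hne : {n | ∃ G : AdmissibleGrammar V, G.IsFor v ∧ G.len = n}.Nonempty :=
    ⟨(trivGrammar v hv).len, trivGrammar v hv, trivGrammar_isFor v hv, rfl⟩
  obtain ⟨G, hG, hlen⟩ := Nat.sInf_mem hne
  exact ⟨G, hG, hlen⟩

theorem Lm_le {v : List V} (G : AdmissibleGrammar V) (h : G.IsFor v) : Lm v ≤ G.len :=
  Nat.sInf_le ⟨G, h, rfl⟩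

theorem Lm_concat_le (v u : List V) (hv : v ≠ []) (hu : u ≠ []) :
    Lm (v ++ u) ≤ Lm v + Lm u := by
  obtain ⟨Gv, hGv, hGvlen⟩ := exists_min_grammar v hv
  obtain ⟨Gu, hGu, hGulen⟩ := exists_min_grammar u hu
  obtain ⟨a0, arest, hA⟩ := List.exists_cons_of_ne_nil Gv.prods_ne
  obtain ⟨b0, brest, hB⟩ := List.exists_cons_of_ne_nil Gu.prods_ne
  set aL := arest.length with haL
  set σ' : ℕ → ℕ := fun j => j + aL with hσ'
  set σ : (V ⊕ ℕ) → (V ⊕ ℕ) := Sum.map id σ' with hσ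
  set N : List (List (V ⊕ ℕ)) :=
    (a0 ++ b0.map σ) :: (arest ++ brest.map (List.map σ)) with hN
  have hNlen : N.length = aL + brest.length + 1 := by simp [hN, haL]
  have hAlen : Gv.prods.length = aL + 1 := by rw [hA]; simp [haL]
  have hBlen : Gu.prods.length = brest.length + 1 := by rw [hB]; simp
  have hNg0 : N.getD 0 [] = a0 ++ b0.map σ := rfl
  have hNgA : ∀ t, t < aL → N.getD (t + 1) [] = Gv.prods.getD (t + 1) [] := by
    intro t ht
    rw [hA, List.getD_cons_succ, List.getD_cons_succ, List.getD_append _ _ _ _ ht]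
  have hNgB : ∀ t, t < brest.length →
      N.getD (t + 1 + aL) [] = (Gu.prods.getD (t + 1) []).map σ := by
    intro t ht
    rw [hB, List.getD_cons_succ]
    have h1 : (t + 1 + aL) = (t + aL) + 1 := by omega
    rw [h1, List.getD_cons_succ, List.getD_append_right _ _ _ _ (by omega)]
    have h2 : t + aL - aL = t := by omega
    rw [h2, List.getD_eq_getElem _ _ (by simpa using ht), List.getElem_map,
      List.getD_eq_getElem _ _ ht]
  have hArefs := Gv.refs
  have hBrefs := Gu.refs
  have hrefsN : ∀ i, i < N.length → ∀ j, Sum.inr j ∈ N.getD i [] →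
      i < j ∧ j < N.length := by
    intro i hi j hj
    match i with
    | 0 =>
      rw [hNg0] at hj
      rcases List.mem_append.1 hj with h | h
      · have := hArefs 0 (by omega) j (by rw [hA, List.getD_cons_zero]; exact h)
        omega
      · obtain ⟨j0, hj0, rfl⟩ := mem_map_inr.1 h
        have := hBrefs 0 (by omega) j0 (by rw [hB, List.getD_cons_zero]; exact hj0)
        simp only [hσ']
        omega
    | t + 1 =>
      by_cases ht : t < aL
      · rw [hNgA t ht] at hj
        have := hArefs (t + 1) (by omega) j hj
        omega
      · have ht2 : (t - aL) + 1 + aL = t + 1 := by omega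
        have htb : t - aL < brest.length := by rw [hNlen] at hi; omega
        rw [← ht2, hNgB _ htb] at hj
        obtain ⟨j0, hj0, rfl⟩ := mem_map_inr.1 hj
        have := hBrefs (t - aL + 1) (by omega) j0 hj0
        simp only [hσ']
        omega
  have hprodne : ∀ g ∈ N, g ≠ [] := by
    intro g hg
    rcases List.mem_cons.1 hg with rfl | hg
    · have := Gv.prod_ne a0 (by rw [hA]; simp)
      simp [this]
    · rcases List.mem_append.1 hg with h | h
      · exact Gv.prod_ne _ (by rw [hA]; exact List.mem_cons_of_mem _ h)
      · obtain ⟨g0, hg0, rfl⟩ := List.mem_map.1 h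
        have := Gu.prod_ne g0 (by rw [hB]; exact List.mem_cons_of_mem _ hg0)
        simp [this]
  set GN : AdmissibleGrammar V := ⟨N, by simp [hN], hprodne, hrefsN⟩ with hGN
  have hexp : GN.IsFor (v ++ u) := by
    show expandStr N N.length (N.getD 0 []) = v ++ u
    rw [hNg0, expandStr_append]
    have hva : expandStr N N.length a0 = v := by
      have hid : (Sum.map id fun j : ℕ => j) = (id : V ⊕ ℕ → V ⊕ ℕ) := by
        funext s; cases s <;> rfl
      have hrefa0 : ∀ j, Sum.inr j ∈ a0 → 1 ≤ j ∧ j < Gv.prods.length := by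
        intro j hj
        have := hArefs 0 (by omega) j (by rw [hA, List.getD_cons_zero]; exact hj)
        omega
      have h1 : expandStr N N.length (a0.map (Sum.map id fun j : ℕ => j)) =
          expandStr Gv.prods N.length a0 := by
        apply expandStr_map Gv.prods N (fun j => j) (fun j => 1 ≤ j ∧ j < Gv.prods.length)
        · intro j hjS
          constructor
          · obtain ⟨t, rfl⟩ : ∃ t, j = t + 1 := ⟨j - 1, by omega⟩
            rw [hid, List.map_id]
            exact hNgA t (by omega)
          · intro j' hj'
            have := hArefs j (by omega) j' hj'
            omega
        · intro j hj
          exact hrefa0 j hj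
      rw [hid, List.map_id] at h1
      rw [h1]
      have h2 : expandStr Gv.prods N.length a0 = expandStr Gv.prods Gv.prods.length a0 := by
        apply expandStr_stab Gv.prods (fun a b c d => (Gv.refs a b c d).1) a0
          (fun j hj => (hrefa0 j hj).1) _ _ (by rw [hNlen, hAlen]; omega) le_rfl (by omega)
      rw [h2]
      have : Gv.prods.getD 0 [] = a0 := by rw [hA, List.getD_cons_zero]
      rw [← this]
      exact hGv
    have hub : expandStr N N.length (b0.map σ) = u := by
      have hrefb0 : ∀ j, Sum.inr j ∈ b0 → 1 ≤ j ∧ j < Gu.prods.length := by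
        intro j hj
        have := hBrefs 0 (by omega) j (by rw [hB, List.getD_cons_zero]; exact hj)
        omega
      have h1 : expandStr N N.length (b0.map σ) =
          expandStr Gu.prods N.length b0 := by
        apply expandStr_map Gu.prods N σ' (fun j => 1 ≤ j ∧ j < Gu.prods.length)
        · intro j hjS
          constructor
          · obtain ⟨t, rfl⟩ : ∃ t, j = t + 1 := ⟨j - 1, by omega⟩
            have : σ' (t + 1) = t + 1 + aL := rfl
            rw [this]
            exact hNgB t (by omega)
          · intro j' hj'
            have := hBrefs j (by omega) j' hj'
            omega
        · intro j hj
          exact hrefb0 j hj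
      rw [h1]
      have h2 : expandStr Gu.prods N.length b0 = expandStr Gu.prods Gu.prods.length b0 := by
        apply expandStr_stab Gu.prods (fun a b c d => (Gu.refs a b c d).1) b0
          (fun j hj => (hrefb0 j hj).1) _ _ (by rw [hNlen, hBlen]; omega) le_rfl (by omega)
      rw [h2]
      have : Gu.prods.getD 0 [] = b0 := by rw [hB, List.getD_cons_zero]
      rw [← this]
      exact hGu
    rw [hva, hub]
  have hlenN : GN.len = Gv.len + Gu.len := by
    show ((N.map List.length).sum) = _
    have h1 : Gv.len = a0.length + (arest.map List.length).sum := by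
      show ((Gv.prods.map List.length).sum) = _
      rw [hA]; simp
    have h2 : Gu.len = b0.length + (brest.map List.length).sum := by
      show ((Gu.prods.map List.length).sum) = _
      rw [hB]; simp
    have h3 : (brest.map (List.map σ)).map List.length = brest.map List.length := by
      simp [List.map_map, Function.comp_def]
    simp only [hN, List.map_cons, List.sum_cons, List.map_append, List.sum_append,
      List.length_append, List.length_map, h3]
    omega
  calc Lm (v ++ u) ≤ GN.len := Lm_le GN hexp
    _ = Lm v + Lm u := by rw [hlenN, hGvlen, hGulen]
end Basic

section Sub
variable {V : Type*}

theorem RF_snoc {P : List (List (V ⊕ ℕ))} {x y z : ℕ} (h : RF P x y)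
    (hz : Sum.inr z ∈ P.getD y []) : RF P x z := by
  induction h with
  | refl t => exact RF.head hz (RF.refl z)
  | head hmem h ih => exact RF.head hmem (ih hz)

theorem subgrammar (G : AdmissibleGrammar V) (p0 : List (V ⊕ ℕ))
    (rest : List (List (V ⊕ ℕ))) (hP : G.prods = p0 :: rest)
    (g : List (V ⊕ ℕ)) (hgne : g ≠ [])
    (hgrefs : ∀ j, Sum.inr j ∈ g → 1 ≤ j ∧ j < G.prods.length) :
    ∃ Gg : AdmissibleGrammar V, Gg.prods = g :: rest ∧
      Gg.expansion = expandStr G.prods G.prods.length g ∧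
      Gg.len = g.length + (rest.map List.length).sum := by
  have hlen : (g :: rest).length = G.prods.length := by rw [hP]; simp
  have hgetD : ∀ t, (g :: rest).getD (t + 1) [] = G.prods.getD (t + 1) [] := by
    intro t
    rw [hP, List.getD_cons_succ, List.getD_cons_succ]
  have hrefs : ∀ i, i < (g :: rest).length → ∀ j, Sum.inr j ∈ (g :: rest).getD i [] →
      i < j ∧ j < (g :: rest).length := by
    intro i hi j hj
    match i with
    | 0 =>
      rw [List.getD_cons_zero] at hj
      have := hgrefs j hj
      omega
    | t + 1 =>
      rw [hgetD t] at hj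
      have := G.refs (t + 1) (by omega) j hj
      omega
  have hprodne : ∀ h ∈ (g :: rest), h ≠ [] := by
    intro h hmem
    rcases List.mem_cons.1 hmem with rfl | hmem
    · exact hgne
    · exact G.prod_ne _ (by rw [hP]; exact List.mem_cons_of_mem _ hmem)
  refine ⟨⟨g :: rest, by simp, hprodne, hrefs⟩, rfl, ?_, ?_⟩
  · show expandStr (g :: rest) (g :: rest).length ((g :: rest).getD 0 []) = _
    rw [List.getD_cons_zero, hlen]
    have hid : (Sum.map id fun j : ℕ => j) = (id : V ⊕ ℕ → V ⊕ ℕ) := by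
      funext s; cases s <;> rfl
    have h1 : expandStr (g :: rest) G.prods.length (g.map (Sum.map id fun j : ℕ => j)) =
        expandStr G.prods G.prods.length g := by
      apply expandStr_map G.prods (g :: rest) (fun j => j)
        (fun j => 1 ≤ j ∧ j < G.prods.length)
      · intro j hjS
        constructor
        · obtain ⟨t, rfl⟩ : ∃ t, j = t + 1 := ⟨j - 1, by omega⟩
          rw [hid, List.map_id]
          exact hgetD t
        · intro j' hj'
          have := G.refs j (by omega) j' hj'
          omega
      · exact hgrefs
    rw [hid, List.map_id] at h1
    exact h1
  · show (((g :: rest).map List.length).sum) = _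
    simp
end Sub

theorem Efn_ne_nil {V : Type*} (G : AdmissibleGrammar V) {i : ℕ} (hi : i < G.prods.length) :
    Efn G.prods i ≠ [] := by
  apply expandStr_ne_nil G.prods G.refs G.prod_ne (G.prods.length - 1)
  · omega
  · rw [List.getD_eq_getElem _ _ hi]
    exact G.prod_ne _ (List.getElem_mem _)
  · intro j hj
    have := G.refs i hi j hj
    omega


/-- For all nonempty strings `v` and `u`, one has
`0 ≤ L^m(v) + L^m(u) − L^m(vu)`, and there is a shortest admissible grammar
`G` for `vu` with
`L^m(v) + L^m(u) − L^m(vu) ≤ L_0(G) + L^{>1}(vu)`, where `L_0(G)` is the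
total length of the non-initial productions of `G`. -/
theorem shortest_grammar_excess_le_vocab {V : Type*} [Fintype V]
    (v u : List V) (hv : v ≠ []) (hu : u ≠ []) :
    (0 : ℤ) ≤ (Lm v : ℤ) + (Lm u : ℤ) - (Lm (v ++ u) : ℤ) ∧
      ∃ G : AdmissibleGrammar V, G.IsFor (v ++ u) ∧ G.len = Lm (v ++ u) ∧
        (Lm v : ℤ) + (Lm u : ℤ) - (Lm (v ++ u) : ℤ)
          ≤ (G.vocabLen : ℤ) + (LgtOne (v ++ u) : ℤ) := by
  have hvu : (v ++ u) ≠ [] := by simp [hv]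
  have hpart1 : Lm (v ++ u) ≤ Lm v + Lm u := Lm_concat_le v u hv hu
  obtain ⟨G, hGfor, hGlen⟩ := exists_min_grammar (v ++ u) hvu
  refine ⟨by push_cast; omega, G, hGfor, hGlen, ?_⟩
  obtain ⟨p0, rest, hP⟩ := List.exists_cons_of_ne_nil G.prods_ne
  have href2 := G.refs
  have hlen1 : 1 ≤ G.prods.length := by rw [hP]; simp
  have hg0 : G.prods.getD 0 [] = p0 := by rw [hP, List.getD_cons_zero]
  have hp0ne : p0 ≠ [] := G.prod_ne p0 (by rw [hP]; simp)
  have hp0len : 1 ≤ p0.length := List.length_pos_iff.2 hp0ne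
  have hrefs_p0 : ∀ j, Sum.inr j ∈ p0 → 1 ≤ j ∧ j < G.prods.length := by
    intro j hj
    have := G.refs 0 (by omega) j (by rw [hg0]; exact hj)
    omega
  have hE0 : Efn G.prods 0 = v ++ u := hGfor
  have hflat : v ++ u = (p0.map (blk G.prods)).flatten := by
    rw [← hE0, Efn_eq_flatten G.prods href2 (by omega), hg0]
  -- every production is reachable
  have hreach : ∀ t, t < G.prods.length → RF G.prods 0 t := by
    by_contra hc
    push_neg at hc
    have hSne : {t | t < G.prods.length ∧ ¬ RF G.prods 0 t}.Nonempty := by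
      obtain ⟨t, h1, h2⟩ := hc; exact ⟨t, h1, h2⟩
    set t0 := sInf {t | t < G.prods.length ∧ ¬ RF G.prods 0 t} with ht0
    have hmem : t0 ∈ {t | t < G.prods.length ∧ ¬ RF G.prods 0 t} := Nat.sInf_mem hSne
    obtain ⟨ht0len, ht0un⟩ := hmem
    have ht0pos : 1 ≤ t0 := by
      by_contra h
      have h0 : t0 = 0 := by omega
      exact ht0un (by rw [h0]; exact RF.refl 0)
    have hmin : ∀ t', t' < t0 → t' < G.prods.length → RF G.prods 0 t' := by
      intro t' h1 h2
      by_contra h3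
      have hle := Nat.sInf_le
        (show t' ∈ {t | t < G.prods.length ∧ ¬ RF G.prods 0 t} from ⟨h2, h3⟩)
      rw [← ht0] at hle
      omega
    have hnoref : ∀ j, j < G.prods.length → Sum.inr t0 ∉ G.prods.getD j [] := by
      intro j hj hmem
      have hjt := (G.refs j hj t0 hmem).1
      exact ht0un (RF_snoc (hmin j hjt hj) hmem)
    obtain ⟨G', hexp', hlen'⟩ := remove_prod G t0 ht0pos ht0len hnoref
    have h1 : Lm (v ++ u) ≤ G'.len := by
      apply Lm_le G'
      show G'.expansion = v ++ u
      rw [hexp']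
      exact hGfor
    have h2 : 1 ≤ (G.prods.getD t0 []).length := by
      rw [List.getD_eq_getElem _ _ ht0len]
      exact List.length_pos_iff.2 (G.prod_ne _ (List.getElem_mem _))
    omega
  classical
  -- the split point
  set Pk : ℕ → Prop := fun k => (((p0.take k).map (blk G.prods)).flatten).length ≤ v.length
    with hPk
  set n := Nat.findGreatest Pk (p0.length - 1) with hn
  have hn1 : Pk n := Nat.findGreatest_spec (Nat.zero_le _) (by simp [hPk])
  have hnlt : n < p0.length := by
    have := Nat.findGreatest_le (P := Pk) (p0.length - 1)
    omega
  have hvlen : 1 ≤ v.length := List.length_pos_iff.2 hv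
  have hulen : 1 ≤ u.length := List.length_pos_iff.2 hu
  have hvulen : ((p0.map (blk G.prods)).flatten).length = v.length + u.length := by
    rw [← hflat]; simp
  have hn2 : ¬ Pk (n + 1) := by
    rcases le_or_gt (n + 1) (p0.length - 1) with h | h
    · exact Nat.findGreatest_is_greatest (by omega) h
    · have hn1' : p0.length ≤ n + 1 := by omega
      simp only [hPk, List.take_of_length_le hn1']
      omega
  set A := ((p0.take n).map (blk G.prods)).flatten with hA
  set B := blk G.prods (p0[n]'hnlt) with hB
  set C := ((p0.drop (n + 1)).map (blk G.prods)).flatten with hC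
  have hsplit : p0 = p0.take n ++ ((p0[n]'hnlt) :: p0.drop (n + 1)) := by
    conv_lhs => rw [← List.take_append_drop n p0, List.drop_eq_getElem_cons hnlt]
  have hdecomp : v ++ u = A ++ (B ++ C) := by
    rw [hflat]
    conv_lhs => rw [hsplit]
    simp only [List.map_append, List.map_cons, List.flatten_append, List.flatten_cons,
      hA, hB, hC]
  have htakeS : ((p0.take (n + 1)).map (blk G.prods)).flatten = A ++ B := by
    have h1 : p0.take (n + 1) = p0.take n ++ [p0[n]'hnlt] := by
      rw [List.take_succ, List.getElem?_eq_getElem hnlt]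
      rfl
    rw [h1, List.map_append, List.flatten_append, hA, hB]
    simp
  set p := A.length with hp
  have hpv : p ≤ v.length := hn1
  have hvpB : v.length < p + B.length := by
    have h1 := hn2
    simp only [hPk, htakeS] at h1
    simp only [List.length_append] at h1
    omega
  set w1 := B.take (v.length - p) with hw1
  set w2 := B.drop (v.length - p) with hw2
  have hw1len : w1.length = v.length - p := by
    rw [hw1, List.length_take]
    omega
  have hw2len : w2.length = B.length - (v.length - p) := by
    rw [hw2, List.length_drop]
  have hveq : v = A ++ w1 := by
    have h1 : v = (v ++ u).take v.length := List.take_left.symm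
    rw [h1, hdecomp, List.take_append,
      List.take_of_length_le (show A.length ≤ v.length from hpv),
      List.take_append_of_le_length (show v.length - A.length ≤ B.length by omega)]
  have hueq : u = w2 ++ C := by
    have h1 : u = (v ++ u).drop v.length := List.drop_left.symm
    rw [h1, hdecomp, List.drop_append,
      List.drop_eq_nil_of_le (show A.length ≤ v.length from hpv),
      List.drop_append_of_le_length (show v.length - A.length ≤ B.length by omega)]
    simp
    rfl
  have hBne : B ≠ [] := by
    rw [hB]
    cases hsym : p0[n]'hnlt with
    | inl a => simp [blk]
    | inr i =>
      have hi : 1 ≤ i ∧ i < G.prods.length :=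
        hrefs_p0 i (by rw [← hsym]; exact List.getElem_mem _)
      show Efn G.prods i ≠ []
      exact Efn_ne_nil G hi.2
  have hBpos : 1 ≤ B.length := List.length_pos_iff.2 hBne
  set L0 := (rest.map List.length).sum with hL0
  have hGlen2 : G.len = p0.length + L0 := by
    show ((G.prods.map List.length).sum) = _
    rw [hP]; simp [hL0]
  have hvocab : G.vocabLen = L0 := by
    show (((G.prods.drop 1).map List.length).sum) = _
    rw [hP]; simp [hL0]
  -- grammar for v
  have hLv : Lm v ≤ n + (v.length - p) + L0 := by
    obtain ⟨Gv, hGvp, hGvexp, hGvlen⟩ := subgrammar G p0 rest hP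
      (p0.take n ++ w1.map Sum.inl)
      (by
        intro hcon
        rw [List.append_eq_nil_iff] at hcon
        have h1 : A = [] := by rw [hA, hcon.1]; simp
        have h2 : w1 = [] := List.map_eq_nil_iff.1 hcon.2
        rw [hveq, h1, h2] at hv
        exact hv rfl)
      (by
        intro j hj
        rcases List.mem_append.1 hj with h | h
        · exact hrefs_p0 j (List.take_subset n p0 h)
        · exfalso
          obtain ⟨a, _, ha⟩ := List.mem_map.1 h
          simp at ha)
    have hGvfor : Gv.IsFor v := by
      show Gv.expansion = v
      rw [hGvexp, expandStr_append]
      obtain ⟨x, hx⟩ : ∃ x, G.prods.length = x + 1 := ⟨G.prods.length - 1, by omega⟩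
      have h1 : expandStr G.prods G.prods.length (w1.map Sum.inl) = w1 := by
        rw [hx]; exact expandStr_map_inl _ x w1
      have h2 : expandStr G.prods G.prods.length (p0.take n) = A := by
        rw [expandStr_blk G.prods (fun a b c d => (href2 a b c d).1) (by omega)]
        intro j hj
        exact hrefs_p0 j (List.take_subset n p0 hj)
      rw [h1, h2, hveq]
    calc Lm v ≤ Gv.len := Lm_le Gv hGvfor
      _ = n + (v.length - p) + L0 := by
        rw [hGvlen, List.length_append, List.length_take, List.length_map, hw1len]
        have : min n p0.length = n := by omega
        omega
  -- grammar for u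
  have hLu : Lm u ≤ (B.length - (v.length - p)) + (p0.length - (n + 1)) + L0 := by
    obtain ⟨Gu, hGup, hGuexp, hGulen⟩ := subgrammar G p0 rest hP
      (w2.map Sum.inl ++ p0.drop (n + 1))
      (by
        intro hcon
        rw [List.append_eq_nil_iff] at hcon
        have h2 : w2 = [] := List.map_eq_nil_iff.1 hcon.1
        have h1 : C = [] := by rw [hC, hcon.2]; simp
        rw [hueq, h1, h2] at hu
        exact hu rfl)
      (by
        intro j hj
        rcases List.mem_append.1 hj with h | h
        · exfalso
          obtain ⟨a, _, ha⟩ := List.mem_map.1 h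
          simp at ha
        · exact hrefs_p0 j (List.drop_subset (n + 1) p0 h))
    have hGufor : Gu.IsFor u := by
      show Gu.expansion = u
      rw [hGuexp, expandStr_append]
      obtain ⟨x, hx⟩ : ∃ x, G.prods.length = x + 1 := ⟨G.prods.length - 1, by omega⟩
      have h1 : expandStr G.prods G.prods.length (w2.map Sum.inl) = w2 := by
        rw [hx]; exact expandStr_map_inl _ x w2
      have h2 : expandStr G.prods G.prods.length (p0.drop (n + 1)) = C := by
        rw [expandStr_blk G.prods (fun a b c d => (href2 a b c d).1) (by omega)]
        intro j hj
        exact hrefs_p0 j (List.drop_subset (n + 1) p0 hj)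
      rw [h1, h2, hueq]
    calc Lm u ≤ Gu.len := Lm_le Gu hGufor
      _ = (B.length - (v.length - p)) + (p0.length - (n + 1)) + L0 := by
        rw [hGulen, List.length_append, List.length_drop, List.length_map, hw2len]
  -- the key dichotomy
  have hbdd : BddAbove {m | ∃ w : List V, w.length = m ∧
      ∃ i j : ℕ, i ≠ j ∧ w <+: (v ++ u).drop i ∧ w <+: (v ++ u).drop j} := by
    refine ⟨(v ++ u).length, ?_⟩
    rintro m ⟨w', rfl, i', j', hij, hp1, hp2⟩
    calc w'.length ≤ ((v ++ u).drop i').length := hp1.length_le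
      _ ≤ (v ++ u).length := by simp
  have hkey : B.length = 1 ∨ B.length ≤ LgtOne (v ++ u) := by
    cases hsym : p0[n]'hnlt with
    | inl a =>
      left
      rw [hB, hsym]
      rfl
    | inr i =>
      right
      have hmemp0 : Sum.inr i ∈ p0 := by rw [← hsym]; exact List.getElem_mem _
      have hmem0 : Sum.inr i ∈ G.prods.getD 0 [] := by rw [hg0]; exact hmemp0
      have hi : 1 ≤ i ∧ i < G.prods.length := hrefs_p0 i hmemp0
      have hwB : B = Efn G.prods i := by rw [hB, hsym]; rfl
      have hwne : Efn G.prods i ≠ [] := Efn_ne_nil G hi.2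
      obtain ⟨la, lb, hlalb⟩ := List.append_of_mem hmemp0
      have htwo : 2 ≤ numOcc (Efn G.prods i) (Efn G.prods 0) := by
        rcases Classical.em ((Sum.inr i : V ⊕ ℕ) ∈ la ∨ Sum.inr i ∈ lb) with hdup | hdup
        · have h1 := occ_blk_dup_le G.prods href2 (Efn G.prods i)
            (show (0:ℕ) < G.prods.length by omega)
            (show G.prods.getD 0 [] = la ++ Sum.inr i :: lb by rw [hg0, hlalb]) hdup
          have h2 : 1 ≤ numOcc (Efn G.prods i) (blk G.prods (Sum.inr i)) :=
            numOcc_self hwne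
          omega
        · rcases Classical.em (∃ b, b < G.prods.length ∧ b ≠ 0 ∧
              Sum.inr i ∈ G.prods.getD b []) with hoth | hoth
          · obtain ⟨b, hb1, hb2, hb3⟩ := hoth
            exact claimD G.prods href2 hi hwne (RF.refl 0) (Ne.symm hb2) hmem0 hb3
              (by omega) (hreach b hb1)
          · exfalso
            push_neg at hdup hoth
            have hgine : G.prods.getD i [] ≠ [] := by
              rw [List.getD_eq_getElem _ _ hi.2]
              exact G.prod_ne _ (List.getElem_mem _)
            obtain ⟨Q, hQp, hQexp, hQlen⟩ := subgrammar G p0 rest hP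
              (la ++ (G.prods.getD i [] ++ lb))
              (fun hcon => hgine (List.append_eq_nil_iff.1 ((List.append_eq_nil_iff.1 hcon).2)).1)
              (by
                intro j hj
                rcases List.mem_append.1 hj with h | h
                · exact hrefs_p0 j (by rw [hlalb]; exact List.mem_append_left _ h)
                · rcases List.mem_append.1 h with h | h
                  · have := G.refs i hi.2 j h
                    omega
                  · exact hrefs_p0 j
                      (by rw [hlalb]
                          exact List.mem_append_right _ (List.mem_cons_of_mem _ h)))
            have hQexp2 : Q.expansion = v ++ u := by
              rw [hQexp]
              rw [← hGfor]
              show _ = expandStr G.prods G.prods.length (G.prods.getD 0 [])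
              rw [hg0, hlalb]
              have hc : la ++ Sum.inr i :: lb = la ++ ([Sum.inr i] ++ lb) := by simp
              rw [hc, expandStr_append, expandStr_append,
                expandStr_append, expandStr_append]
              congr 1
              congr 1
              have h1 : expandStr G.prods G.prods.length [Sum.inr i] =
                  blk G.prods (Sum.inr i) := by
                rw [expandStr_blk G.prods (fun a b c d => (href2 a b c d).1) (by omega)]
                · simp
                · intro j hj
                  simp at hj
                  subst hj
                  exact hi
              rw [h1]
              rfl
            have hQnoref : ∀ j, j < Q.prods.length → Sum.inr i ∉ Q.prods.getD j [] := by
              intro j hj hmem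
              match j with
              | 0 =>
                rw [hQp, List.getD_cons_zero] at hmem
                rcases List.mem_append.1 hmem with h | h
                · exact hdup.1 h
                · rcases List.mem_append.1 h with h | h
                  · have := G.refs i hi.2 i h
                    omega
                  · exact hdup.2 h
              | t + 1 =>
                rw [hQp, List.getD_cons_succ] at hmem
                have hjlen : t + 1 < G.prods.length := by
                  rw [hQp] at hj
                  rw [hP]
                  simpa using hj
                exact hoth (t + 1) hjlen (by omega)
                  (by rw [hP, List.getD_cons_succ]; exact hmem)
            have hQlength : Q.prods.length = G.prods.length := by
              rw [hQp, hP]; simp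
            obtain ⟨G'', hexp'', hlen''⟩ := remove_prod Q i hi.1 (by omega) hQnoref
            have hQgi : Q.prods.getD i [] = G.prods.getD i [] := by
              obtain ⟨t, rfl⟩ : ∃ t, i = t + 1 := ⟨i - 1, by omega⟩
              rw [hQp, hP, List.getD_cons_succ, List.getD_cons_succ]
            have hlb : p0.length = la.length + 1 + lb.length := by
              rw [hlalb]; simp; omega
            have h1 : Lm (v ++ u) ≤ G''.len := by
              apply Lm_le G''
              show G''.expansion = v ++ u
              rw [hexp'']
              exact hQexp2
            rw [hQgi] at hlen''
            have h2 : Q.len = la.length + ((G.prods.getD i []).length + lb.length) + L0 := by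
              rw [hQlen]; simp [hL0]
            omega
      have hE0vu : Efn G.prods 0 = v ++ u := hGfor
      rw [hE0vu] at htwo
      have hcard : 1 < (occFinset (Efn G.prods i) (v ++ u)).card := htwo
      obtain ⟨x, hx, y, hy, hxy⟩ := Finset.one_lt_card.1 hcard
      rw [mem_occFinset] at hx hy
      have hmemS : B.length ∈ {m | ∃ w : List V, w.length = m ∧
          ∃ i j : ℕ, i ≠ j ∧ w <+: (v ++ u).drop i ∧ w <+: (v ++ u).drop j} :=
        ⟨Efn G.prods i, by rw [hwB], x, y, hxy, hx.2, hy.2⟩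
      exact le_csSup hbdd hmemS
  rcases hkey with hk | hk
  · rw [hvocab]
    omega
  · rw [hvocab]
    omega
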